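/- At most one special bidder in the optimum: let w_i > 0, c_i ≥ 0 for i ∈ N, define g(S) = r·(1 − e^{−∑_{i∈S} w_i}) − ∑_{i∈S} c_i with r > 0, and let T = {i : r·e^{−w_i}·w_i < c_i}. If S_o maximizes g over subsets of N, then |S_o ∩ T| ≤ 1. -/

import Mathlib

lemma key_ineq {a b W : ℝ} (ha : 0 < a) (hab : a ≤ b) (hW : a + b ≤ W) :
    Real.exp (-W) * (Real.exp a - 1) ≤ Real.exp (-a) * a := by
  have h1 : Real.exp (-W) ≤ Real.exp (-(a+b)) := Real.exp_le_exp.2 (by linarith)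
  have h2 : (0:ℝ) ≤ Real.exp a - 1 := by
    have := Real.one_le_exp ha.le; linarith
  calc Real.exp (-W) * (Real.exp a - 1)
      ≤ Real.exp (-(a+b)) * (Real.exp a - 1) := by nlinarith
    _ = Real.exp (-b) * (1 - Real.exp (-a)) := by
        have hprod : Real.exp (-a) * Real.exp a = 1 := by
          rw [← Real.exp_add]; simp
        rw [show -(a+b) = -a + -b by ring, Real.exp_add]
        linear_combination Real.exp (-b) * hprod
    _ ≤ Real.exp (-a) * a := by
        have h3 : Real.exp (-b) ≤ Real.exp (-a) := Real.exp_le_exp.2 (by linarith)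
        have h4 : 1 - Real.exp (-a) ≤ a := by
          have := Real.add_one_le_exp (-a); linarith
        have h5 : 0 ≤ 1 - Real.exp (-a) := by
          have : Real.exp (-a) ≤ 1 := Real.exp_le_one_iff.2 (by linarith)
          linarith
        nlinarith [Real.exp_pos (-a), Real.exp_pos (-b)]

theorem stmt_6 {ι : Type*} [DecidableEq ι] (N : Finset ι) (w c : ι → ℝ) (r : ℝ)
    (hr : 0 < r) (hw : ∀ i ∈ N, 0 < w i) (hc : ∀ i ∈ N, 0 ≤ c i)
    (So : Finset ι) (hSoN : So ⊆ N)
    (hopt : ∀ S ⊆ N,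
      r * (1 - Real.exp (-(∑ i ∈ S, w i))) - ∑ i ∈ S, c i
        ≤ r * (1 - Real.exp (-(∑ i ∈ So, w i))) - ∑ i ∈ So, c i) :
    (So ∩ N.filter (fun i => r * Real.exp (-(w i)) * w i < c i)).card ≤ 1 := by
  by_contra h
  push_neg at h
  obtain ⟨i, hi, j, hj, hij⟩ := Finset.one_lt_card.1 h
  -- extract membership info
  simp only [Finset.mem_inter, Finset.mem_filter] at hi hj
  -- WLOG w i ≤ w j by swapping
  have main : ∀ a b : ι, a ∈ So → b ∈ So → a ≠ b →
      r * Real.exp (-(w a)) * w a < c a → w a ≤ w b → False := by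
    intro a b haSo hbSo hab hspec hwab
    have haN := hSoN haSo
    have hbN := hSoN hbSo
    have hwa := hw a haN
    have hwb := hw b hbN
    set W := ∑ k ∈ So, w k with hWdef
    have hWsum : w a + w b ≤ W := by
      have : ({a, b} : Finset ι) ⊆ So := by
        intro x hx; simp at hx; rcases hx with h | h <;> subst h <;> assumption
      calc w a + w b = ∑ k ∈ ({a,b} : Finset ι), w k := by
            rw [Finset.sum_pair hab]
        _ ≤ W := Finset.sum_le_sum_of_subset_of_nonneg this
            (fun k hk _ => (hw k (hSoN hk)).le)
    have herase := hopt (So.erase a) ((Finset.erase_subset _ _).trans hSoN)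
    have hsumw : ∑ k ∈ So.erase a, w k = W - w a := by
      rw [hWdef, ← Finset.add_sum_erase _ _ haSo]; ring
    have hsumc : ∑ k ∈ So.erase a, c k = (∑ k ∈ So, c k) - c a := by
      rw [← Finset.add_sum_erase _ _ haSo]; ring
    rw [hsumw, hsumc] at herase
    -- herase: r*(1 - exp(-(W - w a))) - (C - c a) ≤ r*(1 - exp(-W)) - C
    have hstep : c a ≤ r * (Real.exp (-(W - w a)) - Real.exp (-W)) := by linarith
    have hfac : Real.exp (-(W - w a)) - Real.exp (-W)
        = Real.exp (-W) * (Real.exp (w a) - 1) := by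
      rw [show -(W - w a) = -W + w a by ring, Real.exp_add]; ring
    rw [hfac] at hstep
    have hkey := key_ineq hwa hwab hWsum
    nlinarith
  rcases le_total (w i) (w j) with hle | hle
  · exact main i j hi.1 hj.1 hij hi.2.2 hle
  · exact main j i hj.1 hi.1 hij.symm hj.2.2 hle
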